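/- arXiv:1502.01115 — 4 statements merged into one kernel-verified Lean document; each statement's English description precedes it below -/
import Mathlib

section
/- Fix an integer P ≥ 1, distinct points p₁,…,p_P ∈ ℝ, a target τ ∈ {p₁,…,p_P}, constants σ_k² > 0 and s > 0. For bandwidth b > 0 let K(b) be the P×P matrix with entries K(b)_{ij} = σ_k²·exp(−(p_i−p_j)²/(2b²)), let k_*(b) ∈ ℝ^P have entries k_*(b)_i = σ_k²·exp(−(p_i−τ)²/(2b²)), and let W(b) = k_*(b)ᵀ(K(b) + s·I)⁻¹ (the matrix K(b) + s·I is positive definite, hence invertible, for every b > 0). Then as b → ∞, every coordinate of the weight vector converges: W(b)_i → σ_k²/(P·σ_k² + s) for each i = 1,…,P; in particular all P weights become equal in the limit. -/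
open Filter Matrix

-- quadratic form of Gaussian kernel is nonneg
lemma gauss_quad_nonneg {n : ℕ} (p : Fin n → ℝ) {b : ℝ} (hb : 0 < b) (x : Fin n → ℝ) :
    0 ≤ ∑ i, ∑ k, x i * x k * Real.exp (-(p i - p k) ^ 2 / (2 * b ^ 2)) := by
  have hc : (0:ℝ) < b ^ 2 := by positivity
  set c := b ^ 2 with hcdef
  set u : Fin n → ℝ := fun i => x i * Real.exp (-(p i) ^ 2 / (2 * c)) with hu
  have hexp : ∀ t : ℝ, Real.exp t = ∑' m : ℕ, t ^ m / (Nat.factorial m) := by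
    intro t
    rw [Real.exp_eq_exp_ℝ, NormedSpace.exp_eq_tsum_div]
  have hterm : ∀ i k, x i * x k * Real.exp (-(p i - p k) ^ 2 / (2 * c)) =
      ∑' m : ℕ, u i * u k * ((p i * p k / c) ^ m / (Nat.factorial m)) := by
    intro i k
    rw [tsum_mul_left, ← hexp]
    have : Real.exp (-(p i - p k) ^ 2 / (2 * c)) =
        Real.exp (-(p i) ^ 2 / (2 * c)) * Real.exp (-(p k) ^ 2 / (2 * c)) *
          Real.exp (p i * p k / c) := by
      rw [← Real.exp_add, ← Real.exp_add]
      congr 1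
      field_simp
      ring
    rw [this, hu]
    ring
  have hsum : ∀ i k : Fin n, Summable (fun m : ℕ => u i * u k * ((p i * p k / c) ^ m / (Nat.factorial m))) :=
    fun i k => (Real.summable_pow_div_factorial _).mul_left _
  calc (0:ℝ) ≤ ∑' m : ℕ, ∑ i, ∑ k, u i * u k * ((p i * p k / c) ^ m / (Nat.factorial m)) := by
        refine tsum_nonneg fun m => ?_
        have key : (∑ i, ∑ k, u i * u k * ((p i * p k / c) ^ m / (Nat.factorial m))) =
            (∑ i, u i * p i ^ m) ^ 2 * (c ^ m * ((Nat.factorial m) : ℝ))⁻¹ := by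
          rw [sq, Finset.sum_mul_sum, Finset.sum_mul]
          refine Finset.sum_congr rfl fun i _ => ?_
          rw [Finset.sum_mul]
          refine Finset.sum_congr rfl fun k _ => ?_
          have h1 : (c:ℝ) ^ m ≠ 0 := by positivity
          have h2 : (((Nat.factorial m) : ℝ)) ≠ 0 := Nat.cast_ne_zero.mpr m.factorial_ne_zero
          rw [div_pow, mul_pow]
          field_simp
        rw [key]
        positivity
    _ = ∑ i, ∑ k, x i * x k * Real.exp (-(p i - p k) ^ 2 / (2 * c)) := by
        rw [Summable.tsum_finsetSum (fun i _ => summable_sum (fun k _ => hsum i k))]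
        refine Finset.sum_congr rfl fun i _ => ?_
        rw [Summable.tsum_finsetSum (fun k _ => hsum i k)]
        exact Finset.sum_congr rfl fun k _ => (hterm i k).symm

lemma minf_posdef (P : ℕ) (σk2 s : ℝ) (hσ : 0 < σk2) (hs : 0 < s) :
    (Matrix.of (fun _ _ : Fin P => σk2) + s • (1 : Matrix (Fin P) (Fin P) ℝ)).PosDef := by
  refine Matrix.posDef_iff_dotProduct_mulVec.mpr ⟨?_, ?_⟩
  · ext i k
    simp [Matrix.conjTranspose_apply, Matrix.one_apply, eq_comm]
  · intro x hx
    have hdot : dotProduct x x > 0 := by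
      have := Matrix.dotProduct_star_self_pos_iff (v := x) (R := ℝ)
      simpa [star_trivial] using this.mpr hx
    have h1 : dotProduct (star x) ((Matrix.of (fun _ _ : Fin P => σk2) +
        s • (1 : Matrix (Fin P) (Fin P) ℝ)) *ᵥ x)
        = σk2 * (∑ i, x i) ^ 2 + s * dotProduct x x := by
      rw [add_mulVec, smul_mulVec, one_mulVec, dotProduct_add, dotProduct_smul]
      simp only [star_trivial, smul_eq_mul]
      congr 1
      simp only [dotProduct, mulVec, Matrix.of_apply]
      rw [← Finset.sum_mul]
      rw [show (∑ k, σk2 * x k) = σk2 * ∑ k, x k from by rw [Finset.mul_sum]]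
      ring
    rw [h1]
    have : 0 ≤ σk2 * (∑ i, x i) ^ 2 := by positivity
    nlinarith

lemma exp_entry_tendsto (d : ℝ) :
    Tendsto (fun b : ℝ => Real.exp (-d ^ 2 / (2 * b ^ 2))) atTop (nhds 1) := by
  have hbsq : Tendsto (fun b : ℝ => 2 * b ^ 2) atTop atTop :=
    (tendsto_pow_atTop two_ne_zero).const_mul_atTop two_pos
  have h0 : Tendsto (fun b : ℝ => -d ^ 2 / (2 * b ^ 2)) atTop (nhds 0) :=
    Tendsto.div_atTop tendsto_const_nhds hbsq
  have := (Real.continuous_exp.tendsto 0).comp h0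
  rw [Real.exp_zero] at this
  exact this

/-- As the bandwidth `b → ∞`, the Gaussian-process weights
`W(b) = k_*(b)ᵀ (K(b) + s·I)⁻¹` all converge to `σ_k² / (P·σ_k² + s)`. -/
theorem gp_weights_equal_in_large_bandwidth_limit
    (P : ℕ) (hP : 1 ≤ P) (p : Fin P → ℝ) (hp : Function.Injective p)
    (j : Fin P) (τ : ℝ) (hτ : τ = p j)
    (σk2 s : ℝ) (hσ : 0 < σk2) (hs : 0 < s)
    (K : ℝ → Matrix (Fin P) (Fin P) ℝ)
    (hK : ∀ b, K b = Matrix.of fun i k =>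
      σk2 * Real.exp (-(p i - p k) ^ 2 / (2 * b ^ 2)))
    (kstar : ℝ → Fin P → ℝ)
    (hkstar : ∀ b, kstar b = fun i => σk2 * Real.exp (-(p i - τ) ^ 2 / (2 * b ^ 2)))
    (W : ℝ → Fin P → ℝ)
    (hW : ∀ b, W b = Matrix.vecMul (kstar b) (K b + s • (1 : Matrix (Fin P) (Fin P) ℝ))⁻¹) :
    (∀ b > (0 : ℝ), (K b + s • (1 : Matrix (Fin P) (Fin P) ℝ)).PosDef) ∧
    (∀ i : Fin P,
      Tendsto (fun b : ℝ => W b i) atTop (nhds (σk2 / (P * σk2 + s)))) := by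
  constructor
  · -- positive definiteness
    intro b hb
    refine Matrix.posDef_iff_dotProduct_mulVec.mpr ⟨?_, ?_⟩
    · ext i k
      simp only [conjTranspose_apply, Matrix.add_apply, Matrix.smul_apply, hK b, of_apply,
        Matrix.one_apply, star_trivial]
      by_cases h : i = k
      · subst h; rfl
      · rw [show (p k - p i) ^ 2 = (p i - p k) ^ 2 from by ring,
          if_neg (fun hh => h hh.symm), if_neg h]
    · intro x hx
      have hdot : dotProduct x x > 0 := by
        have := Matrix.dotProduct_star_self_pos_iff (v := x) (R := ℝ)
        simpa [star_trivial] using this.mpr hx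
      have h1 : dotProduct (star x) ((K b + s • (1 : Matrix (Fin P) (Fin P) ℝ)) *ᵥ x)
          = σk2 * (∑ i, ∑ k, x i * x k * Real.exp (-(p i - p k) ^ 2 / (2 * b ^ 2)))
            + s * dotProduct x x := by
        rw [add_mulVec, smul_mulVec, one_mulVec, dotProduct_add, dotProduct_smul]
        simp only [star_trivial, smul_eq_mul]
        congr 1
        rw [hK b]
        simp only [dotProduct, mulVec, of_apply, Finset.mul_sum]
        refine Finset.sum_congr rfl fun a _ => Finset.sum_congr rfl fun k _ => ?_
        ring
      rw [h1]
      have h2 := gauss_quad_nonneg p hb x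
      nlinarith
  · -- the limit
    intro i
    set Minf : Matrix (Fin P) (Fin P) ℝ :=
      Matrix.of (fun _ _ : Fin P => σk2) + s • (1 : Matrix (Fin P) (Fin P) ℝ) with hMinf
    have hpos := minf_posdef P σk2 s hσ hs
    have hdet : IsUnit Minf.det := hpos.det_pos.ne'.isUnit
    have hcst : (0:ℝ) < (P:ℝ) * σk2 + s := by positivity
    -- matrix tendsto
    have hMtendsto : Tendsto (fun b => K b + s • (1 : Matrix (Fin P) (Fin P) ℝ)) atTop
        (nhds Minf) := by
      refine tendsto_pi_nhds.2 fun a => tendsto_pi_nhds.2 fun k => ?_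
      have : Tendsto (fun b : ℝ => σk2 * Real.exp (-(p a - p k) ^ 2 / (2 * b ^ 2))
          + s * (1 : Matrix (Fin P) (Fin P) ℝ) a k) atTop
          (nhds (σk2 * 1 + s * (1 : Matrix (Fin P) (Fin P) ℝ) a k)) :=
        ((exp_entry_tendsto (p a - p k)).const_mul σk2).add tendsto_const_nhds
      have h2 : (fun b => (K b + s • (1 : Matrix (Fin P) (Fin P) ℝ)) a k)
          = fun b : ℝ => σk2 * Real.exp (-(p a - p k) ^ 2 / (2 * b ^ 2))
            + s * (1 : Matrix (Fin P) (Fin P) ℝ) a k := by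
        funext b
        simp [hK b]
      rw [h2]
      simpa [hMinf] using this
    have hinvcont : ContinuousAt Inv.inv Minf := by
      apply continuousAt_matrix_inv
      have := NormedRing.inverse_continuousAt hdet.unit
      rwa [hdet.unit_spec] at this
    have hinv : Tendsto (fun b => (K b + s • (1 : Matrix (Fin P) (Fin P) ℝ))⁻¹) atTop
        (nhds Minf⁻¹) := hinvcont.tendsto.comp hMtendsto
    -- column sums of Minf⁻¹
    have hvec : Matrix.vecMul (fun _ => (1:ℝ)) Minf = ((P:ℝ) * σk2 + s) • (fun _ => (1:ℝ)) := by
      funext k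
      simp only [vecMul, dotProduct, hMinf, Matrix.add_apply, of_apply, Matrix.smul_apply,
        Matrix.one_apply, one_mul, smul_eq_mul, Pi.smul_apply, mul_one]
      rw [Finset.sum_add_distrib]
      congr 1
      · simp [Finset.sum_const, mul_comm]
      · simp [Finset.sum_ite_eq, mul_comm]
    have hcol : ∀ k : Fin P, Matrix.vecMul (fun _ => (1:ℝ)) Minf⁻¹ k = ((P:ℝ) * σk2 + s)⁻¹ := by
      intro k
      have h1 : Matrix.vecMul (Matrix.vecMul (fun _ => (1:ℝ)) Minf) Minf⁻¹
          = fun _ => (1:ℝ) := by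
        rw [Matrix.vecMul_vecMul, Matrix.mul_nonsing_inv _ hdet, Matrix.vecMul_one]
      rw [hvec] at h1
      have h2 : ((P:ℝ) * σk2 + s) * Matrix.vecMul (fun _ => (1:ℝ)) Minf⁻¹ k = 1 := by
        have := congrFun h1 k
        simpa [Matrix.smul_vecMul] using this
      field_simp at h2 ⊢
      linarith
    -- assemble
    have hWfun : ∀ b : ℝ, W b i = ∑ k, kstar b k *
        (K b + s • (1 : Matrix (Fin P) (Fin P) ℝ))⁻¹ k i := by
      intro b
      rw [hW b]
      rfl
    have hterm : ∀ k : Fin P, Tendsto (fun b : ℝ => kstar b k *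
        (K b + s • (1 : Matrix (Fin P) (Fin P) ℝ))⁻¹ k i) atTop
        (nhds (σk2 * Minf⁻¹ k i)) := by
      intro k
      have h1 : Tendsto (fun b : ℝ => kstar b k) atTop (nhds σk2) := by
        have := (exp_entry_tendsto (p k - τ)).const_mul σk2
        simp only [mul_one] at this
        refine this.congr fun b => ?_
        rw [hkstar b]
      have h2 : Tendsto (fun b : ℝ => (K b + s • (1 : Matrix (Fin P) (Fin P) ℝ))⁻¹ k i)
          atTop (nhds (Minf⁻¹ k i)) :=
        tendsto_pi_nhds.1 (tendsto_pi_nhds.1 hinv k) i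
      exact h1.mul h2
    have hsum : Tendsto (fun b : ℝ => ∑ k, kstar b k *
        (K b + s • (1 : Matrix (Fin P) (Fin P) ℝ))⁻¹ k i) atTop
        (nhds (∑ k, σk2 * Minf⁻¹ k i)) :=
      tendsto_finset_sum _ fun k _ => hterm k
    have hval : (∑ k, σk2 * Minf⁻¹ k i) = σk2 / ((P:ℝ) * σk2 + s) := by
      rw [← Finset.mul_sum, div_eq_mul_inv, ← hcol i]
      congr 1
      simp [Matrix.vecMul, dotProduct]
    rw [hval] at hsum
    exact hsum.congr fun b => (hWfun b).symm
end

section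
/- Let P, T be positive integers, let K′ be a symmetric positive semidefinite P×P real matrix, let s : Fin P → ℝ with s_p > 0, and let k_* ∈ ℝ^P. Define the (P·T)×(P·T) matrix K indexed by pairs (p,t) ∈ Fin P × Fin T by K_{(p,t),(p′,t′)} = K′_{p,p′}, the diagonal matrix D with diagonal entries D_{(p,t)} = s_p, and the vector k̃_* ∈ ℝ^{P·T} with entries (k̃_*)_{(p,t)} = (k_*)_p. Then K + D and K′ + diag(s_p/T) are positive definite (hence invertible), and for every q : Fin P × Fin T → ℝ, writing q̄_p = (1/T)·Σ_{t=1}^{T} q_{p,t}, one has the identity k̃_*ᵀ (K + D)⁻¹ q = k_*ᵀ (K′ + diag(s_p/T))⁻¹ q̄. -/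
open Matrix

/-- Posterior-mean equivalence of Proposition 2 as a matrix identity:
the GP posterior predictive mean computed from all `P·T` samples equals the one
computed from the `P` per-model sample means with noise variances `s p / T`. -/
theorem gp_posterior_mean_equivalence
    (P T : ℕ) (hP : 0 < P) (hT : 0 < T)
    (K' : Matrix (Fin P) (Fin P) ℝ) (hK' : K'.PosSemidef)
    (s : Fin P → ℝ) (hs : ∀ p, 0 < s p)
    (kstar : Fin P → ℝ)
    (K : Matrix (Fin P × Fin T) (Fin P × Fin T) ℝ)
    (hK : ∀ pt pt' : Fin P × Fin T, K pt pt' = K' pt.1 pt'.1)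
    (D : Matrix (Fin P × Fin T) (Fin P × Fin T) ℝ)
    (hD : D = Matrix.diagonal fun pt : Fin P × Fin T => s pt.1)
    (ktilde : Fin P × Fin T → ℝ)
    (hktilde : ∀ pt : Fin P × Fin T, ktilde pt = kstar pt.1) :
    (K + D).PosDef ∧
    (K' + Matrix.diagonal fun p : Fin P => s p / (T : ℝ)).PosDef ∧
    ∀ q : Fin P × Fin T → ℝ,
      ktilde ⬝ᵥ ((K + D)⁻¹).mulVec q =
        kstar ⬝ᵥ ((K' + Matrix.diagonal fun p : Fin P => s p / (T : ℝ))⁻¹).mulVec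
          (fun p : Fin P => (1 / (T : ℝ)) * ∑ t : Fin T, q (p, t)) := by
  have hTpos : (0 : ℝ) < (T : ℝ) := by exact_mod_cast hT
  have hTne : (T : ℝ) ≠ 0 := hTpos.ne'
  -- K is positive semidefinite
  have hKquad : ∀ x : Fin P × Fin T → ℝ,
      x ⬝ᵥ K *ᵥ x = (fun p => ∑ t, x (p, t)) ⬝ᵥ K' *ᵥ (fun p => ∑ t, x (p, t)) := by
    intro x
    simp only [dotProduct, mulVec, hK, Fintype.sum_prod_type, Finset.sum_mul]
    refine Finset.sum_congr rfl fun p _ => Finset.sum_congr rfl fun t _ => ?_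
    congr 1
    refine Finset.sum_congr rfl fun p' _ => ?_
    rw [Finset.mul_sum]
  have hKps : K.PosSemidef := by
    rw [Matrix.posSemidef_iff_dotProduct_mulVec]
    constructor
    · ext pt pt'
      simp only [conjTranspose_apply, hK, star_trivial]
      have := congrFun (congrFun hK'.isHermitian pt'.1) pt.1
      simpa using this.symm
    · intro x
      simp only [star_trivial, hKquad]
      simpa only [star_trivial] using hK'.dotProduct_mulVec_nonneg _
  have hDpd : D.PosDef := by
    rw [hD]; exact Matrix.PosDef.diagonal fun pt => hs pt.1
  have hM : (K + D).PosDef := Matrix.PosDef.posSemidef_add hKps hDpd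
  have hA : (K' + Matrix.diagonal fun p : Fin P => s p / (T : ℝ)).PosDef :=
    Matrix.PosDef.posSemidef_add hK' (Matrix.PosDef.diagonal fun p => div_pos (hs p) hTpos)
  refine ⟨hM, hA, fun q => ?_⟩
  set A := K' + Matrix.diagonal fun p : Fin P => s p / (T : ℝ) with hAdef
  set M := K + D with hMdef
  have hAunit : IsUnit A.det := hA.det_pos.ne'.isUnit
  have hMunit : IsUnit M.det := hM.det_pos.ne'.isUnit
  set c := A⁻¹ *ᵥ kstar with hc
  set v : Fin P × Fin T → ℝ := fun pt => c pt.1 / T with hv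
  have hAc : A *ᵥ c = kstar := by
    rw [hc, Matrix.mulVec_mulVec, Matrix.mul_nonsing_inv A hAunit, Matrix.one_mulVec]
  -- key: M *ᵥ v = ktilde
  have hMv : M *ᵥ v = ktilde := by
    funext pt
    obtain ⟨p, t⟩ := pt
    have h1 : (K *ᵥ v) (p, t) = ∑ p', K' p p' * c p' := by
      simp only [mulVec, dotProduct, Fintype.sum_prod_type, hK, hv, Finset.sum_const,
        Finset.card_univ, Fintype.card_fin, nsmul_eq_mul]
      refine Finset.sum_congr rfl fun p' _ => ?_
      field_simp
    have h2 : (M *ᵥ v) (p, t) = ∑ p', K' p p' * c p' + s p * (c p / T) := by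
      rw [hMdef, hD, Matrix.add_mulVec]
      simp only [Pi.add_apply, Matrix.mulVec_diagonal, h1]
      simp only [hv]
    have h3 : (A *ᵥ c) p = ∑ p', K' p p' * c p' + s p / T * c p := by
      rw [hAdef, Matrix.add_mulVec]
      simp only [Pi.add_apply, Matrix.mulVec_diagonal]
      simp only [mulVec, dotProduct]
    rw [h2, hktilde, ← hAc, h3]
    ring
  have hMsymm : Mᵀ = M := hM.isHermitian
  have hAsymm : Aᵀ = A := hA.isHermitian
  have key : ∀ (N : Matrix (Fin P × Fin T) (Fin P × Fin T) ℝ) (u w : Fin P × Fin T → ℝ),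
      (N *ᵥ u) ⬝ᵥ w = u ⬝ᵥ Nᵀ *ᵥ w := by
    intro N u w
    rw [dotProduct_mulVec, ← Matrix.mulVec_transpose, Matrix.transpose_transpose]
  have key' : ∀ (N : Matrix (Fin P) (Fin P) ℝ) (u w : Fin P → ℝ),
      (N *ᵥ u) ⬝ᵥ w = u ⬝ᵥ Nᵀ *ᵥ w := by
    intro N u w
    rw [dotProduct_mulVec, ← Matrix.mulVec_transpose, Matrix.transpose_transpose]
  calc ktilde ⬝ᵥ M⁻¹ *ᵥ q = (M *ᵥ v) ⬝ᵥ M⁻¹ *ᵥ q := by rw [hMv]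
    _ = v ⬝ᵥ Mᵀ *ᵥ (M⁻¹ *ᵥ q) := key M v _
    _ = v ⬝ᵥ q := by
        rw [hMsymm, Matrix.mulVec_mulVec, Matrix.mul_nonsing_inv M hMunit, Matrix.one_mulVec]
    _ = c ⬝ᵥ (fun p : Fin P => (1 / (T : ℝ)) * ∑ t : Fin T, q (p, t)) := by
        simp only [dotProduct, hv, Fintype.sum_prod_type, Finset.mul_sum]
        refine Finset.sum_congr rfl fun p _ => Finset.sum_congr rfl fun t _ => by ring
    _ = kstar ⬝ᵥ A⁻¹ *ᵥ (fun p : Fin P => (1 / (T : ℝ)) * ∑ t : Fin T, q (p, t)) := by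
        rw [hc, key', Matrix.transpose_nonsing_inv, hAsymm]
end

section
/- Let P, T be positive integers, let K′ be a symmetric positive semidefinite P×P real matrix, let s : Fin P → ℝ with s_p > 0, and let k_* ∈ ℝ^P. Define the (P·T)×(P·T) matrix K indexed by pairs (p,t) ∈ Fin P × Fin T by K_{(p,t),(p′,t′)} = K′_{p,p′}, the diagonal matrix D with diagonal entries D_{(p,t)} = s_p, and the vector k̃_* ∈ ℝ^{P·T} with entries (k̃_*)_{(p,t)} = (k_*)_p. Then k̃_*ᵀ (K + D)⁻¹ k̃_* = k_*ᵀ (K′ + diag(s_p/T))⁻¹ k_*; consequently the Gaussian-process posterior predictive variances computed from all P·T samples and from the P per-model means coincide: k(τ,τ) − k̃_*ᵀ(K+D)⁻¹k̃_* = k(τ,τ) − k_*ᵀ(K′+diag(s_p/T))⁻¹k_* for any scalar k(τ,τ). -/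
open Matrix

/-- Posterior-variance equivalence of Proposition 2 as a matrix identity:
the quadratic form in the GP posterior predictive variance computed from all
`P·T` samples equals the one computed from the `P` per-model means. -/
theorem gp_posterior_variance_equivalence
    (P T : ℕ) (hP : 0 < P) (hT : 0 < T)
    (K' : Matrix (Fin P) (Fin P) ℝ) (hK' : K'.PosSemidef)
    (s : Fin P → ℝ) (hs : ∀ p, 0 < s p)
    (kstar : Fin P → ℝ)
    (K : Matrix (Fin P × Fin T) (Fin P × Fin T) ℝ)
    (hK : ∀ pt pt' : Fin P × Fin T, K pt pt' = K' pt.1 pt'.1)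
    (D : Matrix (Fin P × Fin T) (Fin P × Fin T) ℝ)
    (hD : D = Matrix.diagonal fun pt : Fin P × Fin T => s pt.1)
    (ktilde : Fin P × Fin T → ℝ)
    (hktilde : ∀ pt : Fin P × Fin T, ktilde pt = kstar pt.1) :
    (ktilde ⬝ᵥ ((K + D)⁻¹).mulVec ktilde =
      kstar ⬝ᵥ ((K' + Matrix.diagonal fun p : Fin P => s p / (T : ℝ))⁻¹).mulVec kstar) ∧
    ∀ ktt : ℝ,
      ktt - ktilde ⬝ᵥ ((K + D)⁻¹).mulVec ktilde =
        ktt - kstar ⬝ᵥ ((K' + Matrix.diagonal fun p : Fin P => s p / (T : ℝ))⁻¹).mulVec kstar := by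
  have hT' : (0 : ℝ) < (T : ℝ) := by exact_mod_cast hT
  set A : Matrix (Fin P) (Fin P) ℝ :=
    K' + Matrix.diagonal fun p : Fin P => s p / (T : ℝ) with hA
  have hApd : A.PosDef :=
    Matrix.PosDef.posSemidef_add hK'
      (Matrix.posDef_diagonal_iff.mpr fun p => div_pos (hs p) hT')
  -- K is positive semidefinite
  have hKsemi : K.PosSemidef := by
    refine Matrix.posSemidef_iff_dotProduct_mulVec.mpr ⟨?_, ?_⟩
    · ext pt pt'
      simp only [Matrix.conjTranspose_apply, hK, star_trivial]
      simpa using hK'.1.apply pt.1 pt'.1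
    · intro x
      have hq : star x ⬝ᵥ K.mulVec x =
          star (fun p => ∑ t, x (p, t)) ⬝ᵥ K'.mulVec (fun p => ∑ t, x (p, t)) := by
        simp only [dotProduct, Matrix.mulVec, dotProduct, star_trivial,
          Fintype.sum_prod_type, hK, Pi.star_apply]
        refine Finset.sum_congr rfl fun p _ => ?_
        rw [← Finset.sum_mul]
        congr 1
        refine Finset.sum_congr rfl fun p' _ => ?_
        rw [Finset.mul_sum]
      rw [hq]
      exact hK'.dotProduct_mulVec_nonneg _
  have hKDpd : (K + D).PosDef := by
    refine Matrix.PosDef.posSemidef_add hKsemi ?_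
    rw [hD]
    exact Matrix.posDef_diagonal_iff.mpr fun pt => hs pt.1
  -- the solution vectors
  set x : Fin P → ℝ := A⁻¹.mulVec kstar with hx
  have hAdet : IsUnit A.det := hApd.det_pos.ne'.isUnit
  have hAx : A.mulVec x = kstar := by
    rw [hx, Matrix.mulVec_mulVec, Matrix.mul_nonsing_inv _ hAdet, Matrix.one_mulVec]
  have hKDx : (K + D).mulVec (fun pt => x pt.1 / (T : ℝ)) = ktilde := by
    funext pt
    rw [hktilde, Matrix.add_mulVec, hD, Pi.add_apply, Matrix.mulVec_diagonal]
    have h1 : K.mulVec (fun pt => x pt.1 / (T : ℝ)) pt = K'.mulVec x pt.1 := by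
      simp only [Matrix.mulVec, dotProduct, Fintype.sum_prod_type, hK]
      refine Finset.sum_congr rfl fun p' _ => ?_
      rw [Finset.sum_const, Finset.card_univ, Fintype.card_fin, nsmul_eq_mul]
      field_simp
    rw [h1]
    have h2 := congrFun hAx pt.1
    rw [hA, Matrix.add_mulVec, Pi.add_apply, Matrix.mulVec_diagonal] at h2
    rw [← h2]
    field_simp
  have hKDdet : IsUnit (K + D).det := hKDpd.det_pos.ne'.isUnit
  have hinv : ((K + D)⁻¹).mulVec ktilde = fun pt => x pt.1 / (T : ℝ) := by
    rw [← hKDx, Matrix.mulVec_mulVec, Matrix.nonsing_inv_mul _ hKDdet, Matrix.one_mulVec]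
  have hmain : ktilde ⬝ᵥ ((K + D)⁻¹).mulVec ktilde = kstar ⬝ᵥ A⁻¹.mulVec kstar := by
    rw [hinv, ← hx]
    simp only [dotProduct, Fintype.sum_prod_type, hktilde]
    refine Finset.sum_congr rfl fun p _ => ?_
    rw [Finset.sum_const, Finset.card_univ, Fintype.card_fin, nsmul_eq_mul]
    field_simp
  exact ⟨hmain, fun ktt => by rw [hmain]⟩
end

section
/- Fix an integer P ≥ 1, distinct points p₁,…,p_P ∈ ℝ, an index j with target τ = p_j, constants σ_k² > 0, and noise variances s₁,…,s_P > 0. For bandwidth b > 0 let K(b) be the P×P matrix with entries K(b)_{ik} = σ_k²·exp(−(p_i−p_k)²/(2b²)), let k_*(b) ∈ ℝ^P have entries k_*(b)_i = σ_k²·exp(−(p_i−τ)²/(2b²)), let D = diag(s₁,…,s_P), and let W(b) = k_*(b)ᵀ(K(b)+D)⁻¹ (the matrix K(b)+D is positive definite, hence invertible, for every b > 0). Then as b → 0⁺ the weights concentrate on the target model: W(b)_i → 0 for every i ≠ j, and W(b)_j → σ_k²/(σ_k² + s_j). -/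
open Filter Matrix Nat

lemma real_exp_eq_tsum' (x : ℝ) : Real.exp x = ∑' n : ℕ, x ^ n / n ! := by
  rw [Real.exp_eq_exp_ℝ, NormedSpace.exp_eq_tsum_div]

lemma gaussian_posSemidef' {P : ℕ} (p : Fin P → ℝ) (σk2 : ℝ) (hσ : 0 ≤ σk2)
    (b : ℝ) (hb : 0 < b) :
    Matrix.PosSemidef (Matrix.of fun i k : Fin P =>
      σk2 * Real.exp (-(p i - p k) ^ 2 / (2 * b ^ 2))) := by
  set c : ℝ := b ^ 2 with hc
  have hc0 : 0 < c := by positivity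
  have hcne : c ≠ 0 := hc0.ne'
  rw [Matrix.posSemidef_iff_dotProduct_mulVec]
  constructor
  · ext i k
    simp only [Matrix.conjTranspose_apply, Matrix.of_apply, star_trivial]
    ring_nf
  · intro x
    have key : ∀ a d : ℝ, Real.exp (-(a - d) ^ 2 / (2 * c)) =
        Real.exp (-a ^ 2 / (2 * c)) * Real.exp (-d ^ 2 / (2 * c)) * Real.exp (a * d / c) := by
      intro a d
      rw [← Real.exp_add, ← Real.exp_add]
      congr 1
      field_simp
      ring
    set y : Fin P → ℝ := fun i => x i * Real.exp (-(p i) ^ 2 / (2 * c)) with hy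
    have expand : dotProduct (star x) ((Matrix.of fun i k : Fin P =>
        σk2 * Real.exp (-(p i - p k) ^ 2 / (2 * c))) *ᵥ x)
        = ∑ i, ∑ k, σk2 * y i * y k * Real.exp (p i * p k / c) := by
      simp only [dotProduct, Matrix.mulVec, dotProduct, Matrix.of_apply, star_trivial,
        Finset.mul_sum]
      refine Finset.sum_congr rfl fun i _ => Finset.sum_congr rfl fun k _ => ?_
      rw [key]
      simp only [hy]
      ring
    rw [expand]
    have hsummable : ∀ i k : Fin P, Summable fun n : ℕ =>
        σk2 * y i * y k * ((p i * p k / c) ^ n / n !) :=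
      fun i k => (Real.summable_pow_div_factorial _).mul_left _
    calc (0:ℝ) ≤ ∑' n : ℕ, σk2 / (c ^ n * n !) * (∑ i, y i * p i ^ n) ^ 2 := by
          refine tsum_nonneg fun n => ?_
          have : 0 ≤ σk2 / (c ^ n * n !) := by positivity
          positivity
      _ = ∑' n : ℕ, ∑ i, ∑ k, σk2 * y i * y k * ((p i * p k / c) ^ n / n !) := by
          refine tsum_congr fun n => ?_
          rw [sq, Finset.sum_mul_sum]
          rw [Finset.mul_sum]
          refine Finset.sum_congr rfl fun i _ => ?_
          rw [Finset.mul_sum]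
          refine Finset.sum_congr rfl fun k _ => ?_
          rw [div_pow, mul_pow]
          ring
      _ = ∑ i, ∑ k, σk2 * y i * y k * Real.exp (p i * p k / c) := by
          rw [Summable.tsum_finsetSum fun i _ => ?_]
          · refine Finset.sum_congr rfl fun i _ => ?_
            rw [Summable.tsum_finsetSum fun k _ => hsummable i k]
            refine Finset.sum_congr rfl fun k _ => ?_
            rw [real_exp_eq_tsum', ← tsum_mul_left]
          · exact summable_sum fun k _ => hsummable i k

lemma exp_term_tendsto_zero' (d σk2 : ℝ) (hd : 0 < d) :
    Tendsto (fun b : ℝ => σk2 * Real.exp (-d / (2 * b ^ 2)))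
      (nhdsWithin 0 (Set.Ioi 0)) (nhds 0) := by
  have h1 : Tendsto (fun b : ℝ => 2 * b ^ 2) (nhdsWithin 0 (Set.Ioi 0))
      (nhdsWithin 0 (Set.Ioi 0)) := by
    apply tendsto_nhdsWithin_of_tendsto_nhds_of_eventually_within
    · have : Tendsto (fun b : ℝ => 2 * b ^ 2) (nhds 0) (nhds (2 * 0 ^ 2)) :=
        (continuous_const.mul (continuous_pow 2)).tendsto 0
      simpa using this.mono_left nhdsWithin_le_nhds
    · filter_upwards [self_mem_nhdsWithin] with b hb
      have hb' : (0:ℝ) < b := hb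
      exact Set.mem_Ioi.mpr (by positivity)
  have h3 : Tendsto (fun b : ℝ => d * (2 * b ^ 2)⁻¹) (nhdsWithin 0 (Set.Ioi 0)) atTop :=
    (tendsto_inv_nhdsGT_zero.comp h1).const_mul_atTop hd
  have h2 : Tendsto (fun b : ℝ => -d / (2 * b ^ 2)) (nhdsWithin 0 (Set.Ioi 0)) atBot := by
    have := tendsto_neg_atTop_atBot.comp h3
    refine this.congr fun b => ?_
    simp [Function.comp, neg_div, div_eq_mul_inv]
  have := Real.tendsto_exp_atBot.comp h2
  simpa using this.const_mul σk2


/-- As the bandwidth `b → 0⁺`, the Gaussian-process weights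
`W(b) = k_*(b)ᵀ (K(b) + D)⁻¹` concentrate on the target model: `W(b)_i → 0`
for `i ≠ j` and `W(b)_j → σ_k² / (σ_k² + s_j)`. -/
theorem gp_weights_concentrate_in_small_bandwidth_limit
    (P : ℕ) (hP : 1 ≤ P) (p : Fin P → ℝ) (hp : Function.Injective p)
    (j : Fin P) (τ : ℝ) (hτ : τ = p j)
    (σk2 : ℝ) (hσ : 0 < σk2)
    (s : Fin P → ℝ) (hs : ∀ i, 0 < s i)
    (K : ℝ → Matrix (Fin P) (Fin P) ℝ)
    (hK : ∀ b, K b = Matrix.of fun i k =>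
      σk2 * Real.exp (-(p i - p k) ^ 2 / (2 * b ^ 2)))
    (kstar : ℝ → Fin P → ℝ)
    (hkstar : ∀ b, kstar b = fun i => σk2 * Real.exp (-(p i - τ) ^ 2 / (2 * b ^ 2)))
    (D : Matrix (Fin P) (Fin P) ℝ) (hD : D = Matrix.diagonal s)
    (W : ℝ → Fin P → ℝ)
    (hW : ∀ b, W b = Matrix.vecMul (kstar b) (K b + D)⁻¹) :
    (∀ b > (0 : ℝ), (K b + D).PosDef) ∧
    (∀ i : Fin P, i ≠ j →
      Tendsto (fun b : ℝ => W b i) (nhdsWithin 0 (Set.Ioi 0)) (nhds 0)) ∧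
    Tendsto (fun b : ℝ => W b j) (nhdsWithin 0 (Set.Ioi 0))
      (nhds (σk2 / (σk2 + s j))) := by
  -- Part 1: positive definiteness
  have part1 : ∀ b > (0 : ℝ), (K b + D).PosDef := by
    intro b hb
    rw [hK b, hD]
    exact Matrix.PosDef.posSemidef_add (gaussian_posSemidef' p σk2 hσ.le b hb)
      (Matrix.PosDef.diagonal hs)
  refine ⟨part1, ?_⟩
  -- limit matrix
  set L : Matrix (Fin P) (Fin P) ℝ := Matrix.diagonal (fun i => σk2 + s i) with hL
  have hAlim : Tendsto (fun b => K b + D) (nhdsWithin 0 (Set.Ioi 0)) (nhds L) := by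
    refine tendsto_pi_nhds.mpr fun i => ?_
    rw [tendsto_pi_nhds]
    intro k
    by_cases hik : i = k
    · subst hik
      have : (fun b => (K b + D) i i) = fun _ => σk2 + s i := by
        funext b
        rw [hK b, hD]
        simp [Matrix.add_apply]
      rw [this, hL]
      simpa using tendsto_const_nhds
    · have hd : 0 < (p i - p k) ^ 2 := by
        have : p i ≠ p k := fun h => hik (hp h)
        have : p i - p k ≠ 0 := sub_ne_zero.mpr this
        positivity
      have : (fun b => (K b + D) i k)
          = fun b => σk2 * Real.exp (-(p i - p k) ^ 2 / (2 * b ^ 2)) := by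
        funext b
        rw [hK b, hD]
        simp [Matrix.add_apply, Matrix.diagonal_apply_ne _ hik]
      rw [this, hL]
      simpa [Matrix.diagonal_apply_ne _ hik, neg_div] using
        exp_term_tendsto_zero' ((p i - p k) ^ 2) σk2 hd
  -- limit of kstar
  set v : Fin P → ℝ := fun i => if i = j then σk2 else 0 with hv
  have hklim : ∀ i, Tendsto (fun b => kstar b i) (nhdsWithin 0 (Set.Ioi 0)) (nhds (v i)) := by
    intro i
    by_cases hij : i = j
    · subst hij
      have : (fun b => kstar b i) = fun _ => σk2 := by
        funext b
        rw [hkstar b, hτ]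
        simp
      rw [this, hv]
      simpa using tendsto_const_nhds
    · have hd : 0 < (p i - τ) ^ 2 := by
        rw [hτ]
        have : p i ≠ p j := fun h => hij (hp h)
        have : p i - p j ≠ 0 := sub_ne_zero.mpr this
        positivity
      have : (fun b => kstar b i)
          = fun b => σk2 * Real.exp (-(p i - τ) ^ 2 / (2 * b ^ 2)) := by
        funext b; rw [hkstar b]
      rw [this, hv]
      simpa [hij, neg_div] using exp_term_tendsto_zero' ((p i - τ) ^ 2) σk2 hd
  -- invertibility of limit
  have hdetL : L.det ≠ 0 := by
    rw [hL, Matrix.det_diagonal]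
    exact ne_of_gt (Finset.prod_pos fun i _ => by have := hs i; positivity)
  have hinvlim : Tendsto (fun b => (K b + D)⁻¹) (nhdsWithin 0 (Set.Ioi 0)) (nhds L⁻¹) := by
    have hc : ContinuousAt Inv.inv L := by
      apply continuousAt_matrix_inv
      rw [Ring.inverse_eq_inv']
      exact continuousAt_inv₀ hdetL
    exact hc.tendsto.comp hAlim
  -- inverse of L
  have hLinv : L⁻¹ = Matrix.diagonal (fun i => (σk2 + s i)⁻¹) := by
    apply Matrix.inv_eq_right_inv
    rw [hL, Matrix.diagonal_mul_diagonal]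
    have : ∀ i, (σk2 + s i) * (σk2 + s i)⁻¹ = 1 := fun i =>
      mul_inv_cancel₀ (by have := hs i; positivity)
    simp only [this]
    exact Matrix.diagonal_one
  -- componentwise limit of W
  have hWlim : ∀ i : Fin P, Tendsto (fun b => W b i) (nhdsWithin 0 (Set.Ioi 0))
      (nhds (Matrix.vecMul v L⁻¹ i)) := by
    intro i
    have hWform : (fun b => W b i) = fun b => ∑ k, kstar b k * (K b + D)⁻¹ k i := by
      funext b
      rw [hW b]
      simp [Matrix.vecMul, dotProduct]
    rw [hWform]
    have hval : Matrix.vecMul v L⁻¹ i = ∑ k, v k * L⁻¹ k i := by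
      simp [Matrix.vecMul, dotProduct]
    rw [hval]
    refine tendsto_finset_sum _ fun k _ => ?_
    refine (hklim k).mul ?_
    have : Tendsto (fun b => (K b + D)⁻¹ k) (nhdsWithin 0 (Set.Ioi 0)) (nhds (L⁻¹ k)) :=
      (tendsto_pi_nhds.mp hinvlim) k
    exact (tendsto_pi_nhds.mp this) i
  constructor
  · intro i hij
    have := hWlim i
    rw [hLinv, Matrix.vecMul_diagonal] at this
    simpa [hv, hij] using this
  · have := hWlim j
    rw [hLinv, Matrix.vecMul_diagonal] at this
    simpa [hv, div_eq_mul_inv] using this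
end
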